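/- As ε → 0⁺, if x₄ − x₃ = x₃ − x₂ > 0 with x₂, x₃, x₄ bounded away from 0 and ∞, and ε = ∫_{x₃}^{x₄} (1/t)·√((t−x₃)/((t−x₂)(t−x₄))) dt (principal-value/absolute-value interpretation of the square root so the integrand is real positive), then x₄ − x₃ is comparable to ε² : there exist constants 0 < c < C with c ε² ≤ x₄ − x₃ ≤ C ε². -/

import Mathlib

open Set intervalIntegral

set_option maxHeartbeats 1000000 in
theorem stmt9 (K₁ K₂ : ℝ) (hK₁ : 0 < K₁) (hK : K₁ ≤ K₂) :
    ∃ c C ε₀ : ℝ, 0 < c ∧ 0 < C ∧ 0 < ε₀ ∧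
      ∀ x₂ x₃ x₄ ε : ℝ,
        x₂ ∈ Set.Icc K₁ K₂ → x₃ ∈ Set.Icc K₁ K₂ → x₄ ∈ Set.Icc K₁ K₂ →
        x₄ - x₃ = x₃ - x₂ → 0 < x₄ - x₃ → 0 < ε → ε < ε₀ →
        ε = ∫ t in x₃..x₄, (1 / t) * Real.sqrt ((t - x₃) / |(t - x₂) * (t - x₄)|) →
        c * ε ^ 2 ≤ x₄ - x₃ ∧ x₄ - x₃ ≤ C * ε ^ 2 := by
  have hK₂ : 0 < K₂ := lt_of_lt_of_le hK₁ hK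
  refine ⟨K₁ ^ 2 / 4, 64 * K₂ ^ 2, 1, by positivity, by positivity, one_pos, ?_⟩
  intro x₂ x₃ x₄ ε h₂ h₄ h₅ hsym hh hε _ hεint
  set f : ℝ → ℝ := fun t => (1 / t) * Real.sqrt ((t - x₃) / |(t - x₂) * (t - x₄)|) with hf
  set h : ℝ := x₄ - x₃ with hdef
  have hx34 : x₃ < x₄ := by dsimp [h] at hh; linarith
  have hx3 : K₁ ≤ x₃ := h₄.1
  have hx4 : x₄ ≤ K₂ := h₅.2
  have hs : Real.sqrt h ^ 2 = h := Real.sq_sqrt hh.le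
  have hsp : 0 < Real.sqrt h := Real.sqrt_pos.2 hh
  -- nonnegativity of f on [x₃, x₄]
  have hfnn : ∀ t ∈ Icc x₃ x₄, 0 ≤ f t := by
    intro t ht
    exact mul_nonneg (one_div_nonneg.2 (by linarith [ht.1])) (Real.sqrt_nonneg _)
  -- integrability
  have hint : IntervalIntegrable f MeasureTheory.volume x₃ x₄ := by
    by_contra hni
    rw [intervalIntegral.integral_undef hni] at hεint
    linarith
  constructor
  · -- upper bound for ε:  ε ≤ (2/K₁) √h
    set g : ℝ → ℝ := fun t => (1 / K₁) * (x₄ - t) ^ (-(1 / 2) : ℝ) with hg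
    have hgint : IntervalIntegrable g MeasureTheory.volume x₃ x₄ := by
      have h1 : IntervalIntegrable (fun u : ℝ => u ^ (-(1 / 2) : ℝ))
          MeasureTheory.volume h 0 :=
        (intervalIntegral.intervalIntegrable_rpow' (by norm_num)).symm
      have h2 := h1.comp_sub_left x₄
      simp only [sub_zero] at h2
      have : x₄ - h = x₃ := by dsimp [h]; ring
      rw [this] at h2
      exact (h2.const_mul (1 / K₁))
    have hle : ∀ t ∈ Icc x₃ x₄, f t ≤ g t := by
      intro t ht
      rcases eq_or_lt_of_le ht.2 with h4 | h4
      · subst h4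
        have : f t = 0 := by
          simp only [hf, sub_self, mul_zero, abs_zero, div_zero, Real.sqrt_zero, mul_zero]
        rw [this, hg]
        have : (t - t) ^ (-(1 / 2) : ℝ) = 0 := by
          rw [sub_self, Real.zero_rpow (by norm_num)]
        simp [this]
      · have ht2 : 0 < t - x₂ := by
          have : x₃ - x₂ = h := hsym.symm
          have := ht.1; linarith [hh]
        have ht4 : 0 < x₄ - t := by linarith
        have habs : |(t - x₂) * (t - x₄)| = (t - x₂) * (x₄ - t) := by
          rw [abs_mul, abs_of_pos ht2, abs_of_neg (by linarith : t - x₄ < 0)]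
          ring
        have hnum : t - x₃ ≤ t - x₂ := by
          have : x₃ - x₂ = h := hsym.symm
          linarith [hh]
        have hratio : (t - x₃) / ((t - x₂) * (x₄ - t)) ≤ (x₄ - t)⁻¹ := by
          rw [div_le_iff₀ (by positivity)]
          rw [inv_mul_eq_div, le_div_iff₀ ht4]
          nlinarith [ht.1]
        have hsq : Real.sqrt ((t - x₃) / |(t - x₂) * (t - x₄)|)
            ≤ (x₄ - t) ^ (-(1 / 2) : ℝ) := by
          rw [habs]
          calc Real.sqrt ((t - x₃) / ((t - x₂) * (x₄ - t)))
              ≤ Real.sqrt ((x₄ - t)⁻¹) := Real.sqrt_le_sqrt hratio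
            _ = (x₄ - t) ^ (-(1 / 2) : ℝ) := by
                rw [Real.sqrt_inv, Real.sqrt_eq_rpow, ← Real.rpow_neg ht4.le]
        have h1t : 1 / t ≤ 1 / K₁ := by
          apply one_div_le_one_div_of_le hK₁ (by linarith [ht.1])
        calc f t ≤ (1 / K₁) * Real.sqrt ((t - x₃) / |(t - x₂) * (t - x₄)|) := by
              apply mul_le_mul_of_nonneg_right h1t (Real.sqrt_nonneg _)
          _ ≤ (1 / K₁) * (x₄ - t) ^ (-(1 / 2) : ℝ) := by
              apply mul_le_mul_of_nonneg_left hsq (by positivity)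
          _ = g t := rfl
    have hgval : (∫ t in x₃..x₄, g t) = (2 / K₁) * Real.sqrt h := by
      have e0 : (∫ t in x₃..x₄, g t)
          = (1 / K₁) * ∫ t in x₃..x₄, (x₄ - t) ^ (-(1 / 2) : ℝ) :=
        intervalIntegral.integral_const_mul _ _
      have e1 : (∫ t in x₃..x₄, (x₄ - t) ^ (-(1 / 2) : ℝ))
          = ∫ u in x₄ - x₄..x₄ - x₃, u ^ (-(1 / 2) : ℝ) :=
        intervalIntegral.integral_comp_sub_left (fun u => u ^ (-(1 / 2) : ℝ)) x₄
      have e2 : (∫ u in (0:ℝ)..h, u ^ (-(1 / 2) : ℝ))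
          = (h ^ ((-(1 / 2) : ℝ) + 1) - (0:ℝ) ^ ((-(1 / 2) : ℝ) + 1)) / ((-(1 / 2) : ℝ) + 1) :=
        integral_rpow (Or.inl (by norm_num))
      have e3 : ((-(1 / 2) : ℝ) + 1) = (1 / 2 : ℝ) := by norm_num
      rw [e0, e1, sub_self, show x₄ - x₃ = h from rfl, e2, e3,
        Real.zero_rpow (by norm_num : (1/2:ℝ) ≠ 0), ← Real.sqrt_eq_rpow]
      field_simp
      ring
    have hup : ε ≤ (2 / K₁) * Real.sqrt h := by
      rw [hεint, ← hgval]
      exact intervalIntegral.integral_mono_on hx34.le hint hgint hle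
    have h1 : K₁ * ε ≤ 2 * Real.sqrt h := by
      have := mul_le_mul_of_nonneg_left hup hK₁.le
      calc K₁ * ε ≤ K₁ * (2 / K₁ * Real.sqrt h) := this
        _ = 2 * Real.sqrt h := by field_simp
    nlinarith [mul_self_le_mul_self (by positivity : (0:ℝ) ≤ K₁ * ε) h1, hs, hsp]
  · -- lower bound for ε on subinterval [x₃+h/2, x₃+3h/4]
    set a : ℝ := x₃ + h / 2 with ha
    set b : ℝ := x₃ + 3 * h / 4 with hb
    have hab : a ≤ b := by dsimp [a, b]; linarith
    have hsub1 : uIcc x₃ a ⊆ uIcc x₃ x₄ := by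
      apply uIcc_subset_uIcc <;> rw [uIcc_of_le hx34.le] <;>
        constructor <;> linarith
    have hsub2 : uIcc a b ⊆ uIcc x₃ x₄ := by
      apply uIcc_subset_uIcc <;> rw [uIcc_of_le hx34.le] <;>
        constructor <;> dsimp [a, b] <;> linarith
    have hsub3 : uIcc b x₄ ⊆ uIcc x₃ x₄ := by
      apply uIcc_subset_uIcc <;> rw [uIcc_of_le hx34.le] <;>
        constructor <;> linarith
    have hi1 := hint.mono_set hsub1
    have hi2 := hint.mono_set hsub2
    have hi3 := hint.mono_set hsub3
    have hsplit : ε = (∫ t in x₃..a, f t) + (∫ t in a..b, f t) + (∫ t in b..x₄, f t) := by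
      have e1 : (∫ t in a..b, f t) + (∫ t in b..x₄, f t) = ∫ t in a..x₄, f t :=
        intervalIntegral.integral_add_adjacent_intervals hi2 hi3
      have e2 : (∫ t in x₃..a, f t) + (∫ t in a..x₄, f t) = ∫ t in x₃..x₄, f t :=
        intervalIntegral.integral_add_adjacent_intervals hi1 (hi2.trans hi3)
      rw [hεint, ← e2, ← e1]; ring
    have hn1 : 0 ≤ ∫ t in x₃..a, f t := by
      apply intervalIntegral.integral_nonneg (by dsimp [a]; linarith)
      intro u hu
      exact hfnn u ⟨hu.1, by dsimp [a] at hu; linarith [hu.2]⟩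
    have hn3 : 0 ≤ ∫ t in b..x₄, f t := by
      apply intervalIntegral.integral_nonneg (by dsimp [b]; linarith)
      intro u hu
      exact hfnn u ⟨by dsimp [b] at hu; linarith [hu.1], hu.2⟩
    have hmid : (b - a) * (1 / K₂ * (1 / (2 * Real.sqrt h))) ≤ ∫ t in a..b, f t := by
      have hconst : (∫ _t in a..b, (1 / K₂ * (1 / (2 * Real.sqrt h)))) =
          (b - a) * (1 / K₂ * (1 / (2 * Real.sqrt h))) := by
        rw [intervalIntegral.integral_const]; rw [smul_eq_mul]
      rw [← hconst]
      apply intervalIntegral.integral_mono_on hab intervalIntegrable_const hi2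
      intro t ht
      have ht3 : h / 2 ≤ t - x₃ := by dsimp [a] at ht; linarith [ht.1]
      have ht4 : h / 4 ≤ x₄ - t := by
        dsimp [b] at ht; dsimp [h]; linarith [ht.2]
      have ht4' : x₄ - t ≤ h / 2 := by dsimp [a] at ht; dsimp [h]; linarith [ht.1]
      have ht2 : 0 < t - x₂ := by
        have : x₃ - x₂ = h := hsym.symm; linarith
      have ht2' : t - x₂ ≤ 2 * h := by
        have : x₃ - x₂ = h := hsym.symm
        dsimp [b] at ht; linarith [ht.2]
      have habs : |(t - x₂) * (t - x₄)| = (t - x₂) * (x₄ - t) := by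
        rw [abs_mul, abs_of_pos ht2, abs_of_neg (by linarith : t - x₄ < 0)]
        ring
      have hd : 0 < (t - x₂) * (x₄ - t) := by nlinarith
      have hd' : (t - x₂) * (x₄ - t) ≤ h ^ 2 := by nlinarith
      have hratio : 1 / (4 * h) ≤ (t - x₃) / ((t - x₂) * (x₄ - t)) := by
        rw [div_le_div_iff₀ (by linarith) hd]
        nlinarith
      have hsq : 1 / (2 * Real.sqrt h) ≤
          Real.sqrt ((t - x₃) / |(t - x₂) * (t - x₄)|) := by
        have hy : 0 ≤ (t - x₃) / ((t - x₂) * (x₄ - t)) :=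
          div_nonneg (by linarith) hd.le
        rw [habs, Real.le_sqrt (by positivity) hy]
        have e : (1 / (2 * Real.sqrt h)) ^ 2 = 1 / (4 * h) := by
          rw [div_pow, mul_pow, hs]; norm_num
        rw [e]; exact hratio
      have h1t : 1 / K₂ ≤ 1 / t :=
        one_div_le_one_div_of_le (by linarith [ht3, hh, hx3]) (by linarith [ht4])
      calc 1 / K₂ * (1 / (2 * Real.sqrt h))
          ≤ (1 / t) * (1 / (2 * Real.sqrt h)) := by
            apply mul_le_mul_of_nonneg_right h1t (by positivity)
        _ ≤ (1 / t) * Real.sqrt ((t - x₃) / |(t - x₂) * (t - x₄)|) := by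
            apply mul_le_mul_of_nonneg_left hsq
              (one_div_nonneg.2 (by linarith [ht3, hx3]))
    have hba : b - a = h / 4 := by dsimp [a, b]; ring
    have hkey : h / 4 * (1 / K₂ * (1 / (2 * Real.sqrt h))) ≤ ε := by
      rw [hsplit, ← hba]; linarith [hmid]
    -- h/(8 K₂ √h) ≤ ε  ⇒  h ≤ 64 K₂² ε²
    have hkey2 : h / (8 * K₂ * Real.sqrt h) ≤ ε := by
      calc h / (8 * K₂ * Real.sqrt h) = h / 4 * (1 / K₂ * (1 / (2 * Real.sqrt h))) := by
            have hne : Real.sqrt h ≠ 0 := hsp.ne'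
            have hK₂' : K₂ ≠ 0 := hK₂.ne'
            field_simp
            norm_num
        _ ≤ ε := hkey
    have hfin : h ≤ 8 * K₂ * Real.sqrt h * ε := by
      rw [div_le_iff₀ (by positivity)] at hkey2
      linarith [hkey2]
    nlinarith [hs, hsp, hε, hfin, hK₂, sq_nonneg (Real.sqrt h - 8 * K₂ * ε)]
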